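/- Let M ⊆ ℤ be a nonempty integer interval and let (λ_k)_{k∈M}, (μ_k)_{k∈M} be interlaced real sequences with no finite accumulation point such that Σ_{k∈M}(μ_k − λ_k) = Δ < ∞. Then for every n ∈ M the infinite product ∏_{k∈M, k≠n} (μ_k − λ_n)/(λ_k − λ_n) converges (is multipliable) and its value is a strictly positive real number; consequently the number τ_n defined by τ_n^{-1} := ((μ_n − λ_n)/Δ) · ∏_{k∈M, k≠n} (μ_k − λ_n)/(λ_k − λ_n) satisfies τ_n > 0. -/

import Mathlib

open Filter Topology

lemma abs_log_one_add_le_two_mul' {x : ℝ} (hx : |x| ≤ 1/2) :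
    |Real.log (1 + x)| ≤ 2 * |x| := by
  have hx' := abs_le.mp hx
  have h1 : (0:ℝ) < 1 + x := by linarith
  have hub : Real.log (1 + x) ≤ x := by
    have := Real.log_le_sub_one_of_pos h1
    linarith
  have hlb : 1 - (1 + x)⁻¹ ≤ Real.log (1 + x) := by
    have h2 : (0:ℝ) < (1 + x)⁻¹ := by positivity
    have := Real.log_le_sub_one_of_pos h2
    rw [Real.log_inv] at this
    linarith
  rw [abs_le]
  constructor
  · have hinv : (1 + x)⁻¹ ≤ 1 + 2 * |x| := by
      rw [inv_le_iff_one_le_mul₀ h1]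
      rcases abs_cases x with ⟨h, h0⟩ | ⟨h, h0⟩ <;> rw [h] <;> nlinarith
    have : -(2 * |x|) ≤ 1 - (1 + x)⁻¹ := by linarith
    linarith
  · calc Real.log (1 + x) ≤ x := hub
      _ ≤ |x| := le_abs_self x
      _ ≤ 2 * |x| := by nlinarith [abs_nonneg x]

/-- For interlaced sequences on an integer interval with summable gaps,
the product ∏_{k∈M, k≠n} (μ_k − λ_n)/(λ_k − λ_n) is multipliable with strictly
positive value, and τ_n defined by
τ_n⁻¹ = ((μ_n − λ_n)/Δ) ∏_{k≠n} (μ_k − λ_n)/(λ_k − λ_n) is strictly positive. -/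
theorem two_spectra_tau_pos
    (M : Set ℤ) (hM : M.Nonempty)
    (hMint : ∀ a b c : ℤ, a ∈ M → c ∈ M → a ≤ b → b ≤ c → b ∈ M)
    (lam mu : ℤ → ℝ)
    (hinter₁ : ∀ k ∈ M, lam k < mu k)
    (hinter₂ : ∀ k : ℤ, k ∈ M → k + 1 ∈ M → mu k < lam (k + 1))
    (hacc : ∀ R : ℝ, 0 < R → {k ∈ M | |lam k| ≤ R}.Finite)
    (Δ : ℝ)
    (hsum : HasSum (fun k : M => mu (k : ℤ) - lam (k : ℤ)) Δ) :
    ∀ n ∈ M,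
      Multipliable
        (fun k : {k : M // (k : ℤ) ≠ n} =>
          (mu ((k : M) : ℤ) - lam n) / (lam ((k : M) : ℤ) - lam n)) ∧
      0 < ∏' k : {k : M // (k : ℤ) ≠ n},
            (mu ((k : M) : ℤ) - lam n) / (lam ((k : M) : ℤ) - lam n) ∧
      0 < ((mu n - lam n) / Δ *
            ∏' k : {k : M // (k : ℤ) ≠ n},
              (mu ((k : M) : ℤ) - lam n) / (lam ((k : M) : ℤ) - lam n))⁻¹ := by
  -- mu k < lam j whenever k < j, both in M
  have key : ∀ (m : ℕ) (k : ℤ), k ∈ M → (k + m + 1) ∈ M → mu k < lam (k + m + 1) := by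
    intro m
    induction m with
    | zero =>
      intro k hk hk1
      have : k + (0:ℕ) + 1 = k + 1 := by push_cast; ring
      rw [this] at hk1 ⊢
      exact hinter₂ k hk hk1
    | succ m ih =>
      intro k hk hk2
      have he : k + ((m:ℤ)+1) + 1 = (k + m + 1) + 1 := by ring
      have he2 : (k : ℤ) + ((m+1 : ℕ) : ℤ) + 1 = (k + m + 1) + 1 := by push_cast; ring
      rw [he2] at hk2 ⊢
      have hk1 : (k + m + 1) ∈ M := hMint k (k + m + 1) ((k + m + 1) + 1) hk hk2 (by omega) (by omega)
      have h1 := ih k hk hk1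
      have h2 := hinter₁ _ hk1
      have h3 := hinter₂ _ hk1 hk2
      linarith
  have mono : ∀ k ∈ M, ∀ j ∈ M, k < j → mu k < lam j := by
    intro k hk j hj hkj
    have hm : ((j - k - 1).toNat : ℤ) = j - k - 1 := Int.toNat_of_nonneg (by omega)
    have : j = k + ((j - k - 1).toNat : ℤ) + 1 := by omega
    rw [this] at hj ⊢
    exact key _ k hk hj
  intro n hn
  -- a uniform lower bound on |lam k - lam n|
  have hδ : ∃ δ : ℝ, 0 < δ ∧ ∀ k ∈ M, k ≠ n → δ ≤ |lam k - lam n| := by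
    have hn1 := hinter₁ n hn
    by_cases hprev : (n - 1) ∈ M
    · have hprev1 : mu (n-1) < lam n := by
        have := hinter₂ (n-1) hprev (by simpa using hn)
        simpa using this
      refine ⟨min (mu n - lam n) (lam n - mu (n-1)), lt_min (by linarith) (by linarith), ?_⟩
      intro k hk hkn
      rcases lt_or_gt_of_ne hkn with h | h
      · -- k < n
        have hmk : mu k ≤ mu (n-1) := by
          rcases eq_or_lt_of_le (show k ≤ n - 1 by omega) with h' | h'
          · rw [h']
          · have h1 := mono k hk (n-1) hprev h'
            have h2 := hinter₁ (n-1) hprev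
            linarith
        have hlk := hinter₁ k hk
        rw [abs_of_neg (by linarith)]
        have := min_le_right (mu n - lam n) (lam n - mu (n-1))
        linarith
      · -- n < k
        have h1 := mono n hn k hk h
        rw [abs_of_pos (by linarith)]
        have := min_le_left (mu n - lam n) (lam n - mu (n-1))
        linarith
    · refine ⟨mu n - lam n, by linarith, ?_⟩
      intro k hk hkn
      have hklt : n < k := by
        rcases lt_or_gt_of_ne hkn with h | h
        · exact absurd (hMint k (n-1) n hk hn (by omega) (by omega)) hprev
        · exact h
      have h1 := mono n hn k hk hklt
      rw [abs_of_pos (by linarith)]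
      linarith
  obtain ⟨δ, hδ0, hδ⟩ := hδ
  set f : {k : M // (k : ℤ) ≠ n} → ℝ :=
    fun k => (mu ((k : M) : ℤ) - lam n) / (lam ((k : M) : ℤ) - lam n) with hfdef
  set g : {k : M // (k : ℤ) ≠ n} → ℝ :=
    fun k => (mu ((k : M) : ℤ) - lam ((k : M) : ℤ)) / (lam ((k : M) : ℤ) - lam n) with hgdef
  have hkM : ∀ k : {k : M // (k : ℤ) ≠ n}, ((k : M) : ℤ) ∈ M := fun k => (k : M).2
  have hδk : ∀ k : {k : M // (k : ℤ) ≠ n}, δ ≤ |lam ((k : M) : ℤ) - lam n| :=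
    fun k => hδ _ (hkM k) k.2
  have hden : ∀ k : {k : M // (k : ℤ) ≠ n}, lam ((k : M) : ℤ) - lam n ≠ 0 := by
    intro k h
    have := hδk k
    rw [h, abs_zero] at this
    linarith
  have hfg : ∀ k, f k = 1 + g k := by
    intro k
    have hinv : (lam ((k : M) : ℤ) - lam n) * (lam ((k : M) : ℤ) - lam n)⁻¹ = 1 :=
      mul_inv_cancel₀ (hden k)
    simp only [hfdef, hgdef, div_eq_mul_inv]
    linear_combination hinv
  have hfpos : ∀ k, 0 < f k := by
    intro k
    have hkm := hkM k
    have hl := hinter₁ _ hkm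
    rcases lt_or_gt_of_ne k.2 with h | h
    · have h1 := mono _ hkm n hn h
      apply div_pos_of_neg_of_neg <;> linarith
    · have h1 := mono n hn _ hkm h
      apply div_pos <;> linarith [hinter₁ n hn]
  have hgbound : ∀ k, |g k| ≤ (mu ((k : M) : ℤ) - lam ((k : M) : ℤ)) / δ := by
    intro k
    have hl := hinter₁ _ (hkM k)
    rw [hgdef]
    simp only
    rw [abs_div, abs_of_pos (by linarith)]
    exact div_le_div_of_nonneg_left (by linarith) hδ0 (hδk k)
  -- summability
  have hsub : Summable (fun k : {k : M // (k : ℤ) ≠ n} =>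
      mu ((k : M) : ℤ) - lam ((k : M) : ℤ)) := by
    have h1 : Summable (fun k : M => mu (k : ℤ) - lam (k : ℤ)) := hsum.summable
    exact h1.subtype {k : M | (k : ℤ) ≠ n}
  have hG : Summable (fun k : {k : M // (k : ℤ) ≠ n} =>
      (mu ((k : M) : ℤ) - lam ((k : M) : ℤ)) / δ) := hsub.div_const δ
  have hgabs : Summable (fun k => |g k|) := by
    apply hG.of_nonneg_of_le (fun k => abs_nonneg _) hgbound
  have hgsum : Summable g := hgabs.of_abs
  have hev : ∀ᶠ k in cofinite, |g k| ≤ 1/2 := by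
    have h0 := hgsum.tendsto_cofinite_zero
    have := Metric.tendsto_nhds.mp h0 (1/2) (by norm_num)
    filter_upwards [this] with k hk
    rw [Real.dist_eq, sub_zero] at hk
    linarith
  have hlog : Summable (fun k => Real.log (f k)) := by
    refine Summable.of_norm_bounded_eventually
      (g := fun k : {k : M // (k : ℤ) ≠ n} =>
        2 * ((mu ((k : M) : ℤ) - lam ((k : M) : ℤ)) / δ)) (hG.mul_left 2) ?_
    filter_upwards [hev] with k hk
    rw [hfg k, Real.norm_eq_abs]
    calc |Real.log (1 + g k)| ≤ 2 * |g k| := abs_log_one_add_le_two_mul' hk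
      _ ≤ 2 * ((mu ((k : M) : ℤ) - lam ((k : M) : ℤ)) / δ) := by
          have := hgbound k; linarith
  have hp : HasProd f (Real.exp (∑' k, Real.log (f k))) := by
    have h1 := hlog.hasSum.rexp
    have h2 : (Real.exp ∘ fun k => Real.log (f k)) = f :=
      funext fun k => Real.exp_log (hfpos k)
    rwa [h2] at h1
  have hmul : Multipliable f := ⟨_, hp⟩
  have htp : ∏' k, f k = Real.exp (∑' k, Real.log (f k)) := hp.tprod_eq
  have htppos : 0 < ∏' k, f k := htp ▸ Real.exp_pos _
  have hΔpos : 0 < Δ := by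
    have hle : mu n - lam n ≤ Δ := by
      refine le_hasSum hsum ⟨n, hn⟩ (fun b _ => ?_)
      have := hinter₁ (b : ℤ) b.2
      linarith
    have := hinter₁ n hn
    linarith
  refine ⟨hmul, htppos, ?_⟩
  have : 0 < (mu n - lam n) / Δ := div_pos (by linarith [hinter₁ n hn]) hΔpos
  exact inv_pos.mpr (mul_pos this htppos)
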